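/- Trigonometric identity: for n ≥ 2, k ∈ {1,…,n}, and l ∈ {2,…,n-1}, (2/(n+1)) sin²(klπ/(n+1)) = [∏_{j=1}^{l-1}(cos(kπ/(n+1)) - cos(jπ/l)) · ∏_{j=l}^{n-1}(cos(kπ/(n+1)) - cos((j-l+1)π/(n-l+1)))] / ∏_{j=1, j≠k}^{n}(cos(kπ/(n+1)) - cos(jπ/(n+1))). -/

import Mathlib

open Real Finset

open Polynomial Polynomial.Chebyshev in
lemma chebU_aux : ∀ m : ℕ, (U ℝ (m : ℤ)).natDegree ≤ m ∧ (U ℝ (m : ℤ)).coeff m = 2 ^ m := by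
  intro m
  induction m using Nat.twoStepInduction with
  | zero => simp [U_zero]
  | one =>
      constructor
      · rw [Nat.cast_one, U_one]
        refine natDegree_mul_le.trans ?_
        simp
      · simp [U_one]
  | more m ih1 ih2 =>
      have h := U_add_two ℝ (m : ℤ)
      have hcast : ((m + 2 : ℕ) : ℤ) = (m : ℤ) + 2 := by push_cast; ring
      have hcast1 : ((m + 1 : ℕ) : ℤ) = (m : ℤ) + 1 := by push_cast; ring
      rw [hcast1] at ih2
      rw [hcast, h]
      have h2C : (2 : ℝ[X]) = Polynomial.C 2 := (map_ofNat Polynomial.C 2).symm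
      constructor
      · refine (natDegree_sub_le _ _).trans (max_le ?_ (ih1.1.trans (by omega)))
        refine natDegree_mul_le.trans ?_
        have : (2 * X : ℝ[X]).natDegree ≤ 1 := natDegree_mul_le.trans (by simp)
        have h4 := ih2.1
        omega
      · rw [coeff_sub, coeff_eq_zero_of_natDegree_lt (ih1.1.trans_lt (by omega)),
          mul_assoc, h2C, coeff_C_mul, coeff_X_mul, ih2.2]
        ring

open Polynomial Polynomial.Chebyshev in
lemma chebU_factor (M : ℕ) :
    U ℝ (M : ℤ) = C ((2:ℝ) ^ M) *
      ∏ j ∈ Finset.Icc 1 M, (X - C (Real.cos (j * π / (M + 1)))) := by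
  rw [← sub_eq_zero]
  set q : ℝ[X] := ∏ j ∈ Finset.Icc 1 M, (X - C (Real.cos (j * π / (M + 1)))) with hq
  have hM1 : (0:ℝ) < (M:ℝ) + 1 := by positivity
  have hq_monic : q.Monic := monic_prod_of_monic _ _ fun j _ => monic_X_sub_C _
  have hq_deg : q.natDegree = M := by
    rw [hq, natDegree_prod_of_monic _ _ fun j _ => monic_X_sub_C _]
    simp [natDegree_X_sub_C]
  have hroot : ∀ j ∈ Finset.Icc 1 M, (U ℝ (M : ℤ)).eval (Real.cos (j * π / (M + 1))) = 0 := by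
    intro j hj
    obtain ⟨hj1, hj2⟩ := Finset.mem_Icc.mp hj
    have hjpos : (0:ℝ) < j := by exact_mod_cast hj1
    have hjlt : (j:ℝ) < (M:ℝ) + 1 := by exact_mod_cast Nat.lt_succ_of_le hj2
    have hpos : 0 < (j:ℝ) * π / ((M:ℝ) + 1) := by positivity
    have hlt : (j:ℝ) * π / ((M:ℝ) + 1) < π := by
      rw [div_lt_iff₀ hM1]
      nlinarith [pi_pos]
    have hsin : Real.sin ((j:ℝ) * π / ((M:ℝ) + 1)) ≠ 0 :=
      ne_of_gt (Real.sin_pos_of_pos_of_lt_pi hpos hlt)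
    have h := U_real_cos ((j:ℝ) * π / ((M:ℝ) + 1)) (M : ℤ)
    have hc : ((((M:ℕ):ℤ):ℝ) + 1) * ((j:ℝ) * π / ((M:ℝ) + 1)) = (j:ℝ) * π := by
      push_cast
      field_simp
    rw [hc, Real.sin_nat_mul_pi] at h
    exact (mul_eq_zero.mp h).resolve_right hsin
  by_cases hM : M = 0
  · subst hM; simp [U_zero, hq]
  apply Polynomial.eq_zero_of_natDegree_lt_card_of_eval_eq_zero' _
    ((Finset.Icc 1 M).image fun j : ℕ => Real.cos ((j:ℝ) * π / ((M:ℝ) + 1)))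
  · intro x hx
    obtain ⟨j, hj, rfl⟩ := Finset.mem_image.mp hx
    rw [eval_sub, eval_mul, eval_C, hroot j hj, hq, eval_prod]
    rw [Finset.prod_eq_zero hj (by simp)]
    ring
  · have hinj : Set.InjOn (fun j : ℕ => Real.cos ((j:ℝ) * π / ((M:ℝ) + 1))) ↑(Finset.Icc 1 M) := by
      intro a ha b hb hab
      simp only [Finset.coe_Icc, Set.mem_Icc] at ha hb
      obtain ⟨ha1, ha2⟩ := ha
      obtain ⟨hb1, hb2⟩ := hb
      have hmem : ∀ c : ℕ, c ≤ M → (c:ℝ) * π / ((M:ℝ) + 1) ∈ Set.Icc 0 π := by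
        intro c hc2
        have : (c:ℝ) ≤ (M:ℝ) := by exact_mod_cast hc2
        constructor
        · positivity
        · rw [div_le_iff₀ hM1]; nlinarith [pi_pos]
      have := Real.injOn_cos (hmem a ha2) (hmem b hb2) hab
      have : (a:ℝ) = b := by
        field_simp at this
        exact this
      exact_mod_cast this
    have hcard : ((Finset.Icc 1 M).image fun j : ℕ => Real.cos ((j:ℝ) * π / ((M:ℝ) + 1))).card = M := by
      rw [Finset.card_image_of_injOn hinj, Nat.card_Icc]
      omega
    rw [hcard]
    by_cases h0 : U ℝ (M : ℤ) - C ((2:ℝ) ^ M) * q = 0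
    · rw [h0]; simpa using Nat.pos_of_ne_zero hM
    rw [Polynomial.natDegree_lt_iff_degree_lt h0]
    rw [Polynomial.degree_lt_iff_coeff_zero]
    intro i hi
    have hi' : M ≤ i := by exact_mod_cast hi
    rw [coeff_sub, coeff_C_mul]
    rcases eq_or_lt_of_le hi' with rfl | hlt
    · have hq1 : q.coeff M = 1 := by rw [← hq_deg]; exact hq_monic.coeff_natDegree
      rw [(chebU_aux M).2, hq1]
      ring
    · rw [coeff_eq_zero_of_natDegree_lt ((chebU_aux M).1.trans_lt hlt),
        coeff_eq_zero_of_natDegree_lt (by rw [hq_deg]; exact hlt)]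
      ring

open Polynomial Polynomial.Chebyshev in
lemma sin_prod (M : ℕ) (t : ℝ) :
    Real.sin (((M:ℝ) + 1) * t) = 2 ^ M * Real.sin t *
      ∏ j ∈ Finset.Icc 1 M, (Real.cos t - Real.cos (j * π / (M + 1))) := by
  have h := U_real_cos t (M : ℤ)
  rw [chebU_factor M] at h
  rw [eval_mul, eval_C, eval_prod] at h
  simp only [eval_sub, eval_X, eval_C] at h
  have hc : ((((M:ℕ):ℤ):ℝ) + 1) = (M:ℝ) + 1 := by push_cast; ring
  rw [hc] at h
  rw [← h]
  ring

open Polynomial Polynomial.Chebyshev in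
lemma denom_eval (n k : ℕ) (hk1 : 1 ≤ k) (hk2 : k ≤ n) :
    (2:ℝ)^n * (∏ j ∈ (Finset.Icc 1 n).erase k,
        (Real.cos ((k:ℝ) * π / ((n:ℝ) + 1)) - Real.cos ((j:ℝ) * π / ((n:ℝ) + 1)))) *
      Real.sin ((k:ℝ) * π / ((n:ℝ) + 1)) ^ 2 = -((-1:ℝ)^k * ((n:ℝ) + 1)) := by
  set t : ℝ := (k:ℝ) * π / ((n:ℝ) + 1) with ht
  have hn1 : (0:ℝ) < (n:ℝ) + 1 := by positivity
  have hklt : (k:ℝ) < (n:ℝ) + 1 := by exact_mod_cast Nat.lt_succ_of_le hk2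
  have hkpos : (0:ℝ) < (k:ℝ) := by exact_mod_cast hk1
  have htpos : 0 < t := by rw [ht]; positivity
  have htlt : t < π := by rw [ht, div_lt_iff₀ hn1]; nlinarith [pi_pos]
  have hsin : Real.sin t ≠ 0 := ne_of_gt (Real.sin_pos_of_pos_of_lt_pi htpos htlt)
  have htpi : ((n:ℝ) + 1) * t = (k:ℝ) * π := by rw [ht]; field_simp
  have key : ∀ x : ℝ, (U ℝ (n:ℤ)).eval (Real.cos x) * Real.sin x = Real.sin (((n:ℝ) + 1) * x) := by
    intro x
    have h := U_real_cos x (n : ℤ)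
    have hc : ((((n:ℕ):ℤ):ℝ) + 1) = (n:ℝ) + 1 := by push_cast; ring
    rw [hc] at h
    exact h
  have hderiv : ∀ x : ℝ,
      HasDerivAt (fun y => (U ℝ (n:ℤ)).eval (Real.cos y) * Real.sin y)
        ((derivative (U ℝ (n:ℤ))).eval (Real.cos x) * (-Real.sin x) * Real.sin x
          + (U ℝ (n:ℤ)).eval (Real.cos x) * Real.cos x) x := by
    intro x
    have h1 : HasDerivAt (fun y => (U ℝ (n:ℤ)).eval (Real.cos y))
        ((derivative (U ℝ (n:ℤ))).eval (Real.cos x) * (-Real.sin x)) x := by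
      simpa [Function.comp_def] using
        (((U ℝ (n:ℤ)).hasDerivAt (Real.cos x)).comp x (Real.hasDerivAt_cos x))
    exact h1.mul (Real.hasDerivAt_sin x)
  have hg : ∀ x : ℝ, HasDerivAt (fun y => Real.sin (((n:ℝ) + 1) * y))
      (Real.cos (((n:ℝ) + 1) * x) * ((n:ℝ) + 1)) x := by
    intro x
    exact (Real.hasDerivAt_sin _).comp x (by simpa using (hasDerivAt_id x).const_mul ((n:ℝ) + 1))
  have heq : (fun y => (U ℝ (n:ℤ)).eval (Real.cos y) * Real.sin y)
      = fun y => Real.sin (((n:ℝ) + 1) * y) := funext key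
  have h1 : (derivative (U ℝ (n:ℤ))).eval (Real.cos t) * (-Real.sin t) * Real.sin t
      + (U ℝ (n:ℤ)).eval (Real.cos t) * Real.cos t
      = Real.cos (((n:ℝ) + 1) * t) * ((n:ℝ) + 1) := by
    have hf := hderiv t
    rw [heq] at hf
    exact hf.unique (hg t)
  have hUt : (U ℝ (n:ℤ)).eval (Real.cos t) = 0 := by
    have h := key t
    rw [htpi, Real.sin_nat_mul_pi] at h
    exact (mul_eq_zero.mp h).resolve_right hsin
  have hcos : Real.cos (((n:ℝ) + 1) * t) = (-1:ℝ)^k := by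
    rw [htpi]
    have := Real.cos_nat_mul_pi_sub 0 k
    simpa using this
  rw [hUt, hcos] at h1
  -- eval of derivative via factorization
  have hkmem : k ∈ Finset.Icc 1 n := Finset.mem_Icc.mpr ⟨hk1, hk2⟩
  have hDev : (derivative (U ℝ (n:ℤ))).eval (Real.cos t) =
      2^n * ∏ j ∈ (Finset.Icc 1 n).erase k,
        (Real.cos t - Real.cos ((j:ℝ) * π / ((n:ℝ) + 1))) := by
    have hfac := chebU_factor n
    rw [hfac, derivative_C_mul, eval_mul, eval_C]
    congr 1
    have hval : (Finset.Icc 1 n).val = k ::ₘ ((Finset.Icc 1 n).erase k).val := by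
      conv_lhs => rw [← Finset.insert_erase hkmem]
      exact Finset.insert_val_of_notMem (Finset.notMem_erase _ _)
    have hSprod : (∏ j ∈ Finset.Icc 1 n, (X - C (Real.cos ((j:ℝ) * π / ((n:ℝ) + 1)))))
        = (Multiset.map (fun a => X - C a)
            ((Finset.Icc 1 n).val.map (fun j : ℕ => Real.cos ((j:ℝ) * π / ((n:ℝ) + 1))))).prod := by
      rw [Multiset.map_map]
      rfl
    have hmem : Real.cos t ∈ (Finset.Icc 1 n).val.map
        (fun j : ℕ => Real.cos ((j:ℝ) * π / ((n:ℝ) + 1))) := by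
      rw [ht]
      exact Multiset.mem_map_of_mem _ hkmem
    rw [hSprod, Polynomial.eval_multiset_prod_X_sub_C_derivative hmem]
    rw [hval, Multiset.map_cons, ht, Multiset.erase_cons_head, Multiset.map_map]
    rfl
  rw [hDev] at h1
  nlinarith [h1]

theorem stmt14 (n k l : ℕ) (hn : 2 ≤ n) (hk1 : 1 ≤ k) (hk2 : k ≤ n)
    (hl1 : 2 ≤ l) (hl2 : l ≤ n - 1) :
    (2 / (n + 1)) * Real.sin (k * l * π / (n + 1)) ^ 2 =
      ((∏ j ∈ Finset.Icc 1 (l - 1),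
          (Real.cos (k * π / (n + 1)) - Real.cos (j * π / l))) *
       (∏ j ∈ Finset.Icc l (n - 1),
          (Real.cos (k * π / (n + 1)) -
            Real.cos ((j - l + 1 : ℕ) * π / (n - l + 1 : ℕ))))) /
      (∏ j ∈ (Finset.Icc 1 n).erase k,
        (Real.cos (k * π / (n + 1)) - Real.cos (j * π / (n + 1)))) := by
  obtain ⟨L, rfl⟩ : ∃ L, l = L + 1 := ⟨l - 1, by omega⟩
  simp only [Nat.add_sub_cancel]
  set E := n - (L + 1) with hE
  set t : ℝ := (k:ℝ) * π / ((n:ℝ) + 1) with ht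
  have hd := denom_eval n k hk1 hk2
  rw [← ht] at hd
  have hre : (∏ j ∈ Finset.Icc (L + 1) (n - 1),
      (Real.cos t - Real.cos ((((j - (L + 1) + 1 : ℕ)):ℝ) * π / ((E + 1 : ℕ) : ℝ))))
      = ∏ i ∈ Finset.Icc 1 E,
      (Real.cos t - Real.cos ((i:ℝ) * π / ((E + 1 : ℕ) : ℝ))) := by
    refine Finset.prod_nbij' (fun j => j - (L + 1) + 1) (fun i => i + L) ?_ ?_ ?_ ?_ ?_
    · intro a ha
      simp only [Finset.mem_Icc] at ha ⊢
      omega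
    · intro a ha
      simp only [Finset.mem_Icc] at ha ⊢
      omega
    · intro a ha
      simp only [Finset.mem_Icc] at ha
      omega
    · intro a ha
      simp only [Finset.mem_Icc] at ha
      omega
    · intro a ha
      rfl
  rw [hre]
  push_cast
  have hsin2 : Real.sin (((E:ℝ) + 1) * t) = -((-1:ℝ)^k * Real.sin (((L:ℝ) + 1) * t)) := by
    have hEn : (E:ℝ) + (L:ℝ) + 2 = (n:ℝ) + 1 := by
      have : E + L + 1 = n := by omega
      have := congrArg (fun x : ℕ => (x:ℝ)) this
      push_cast at this
      linarith
    have harg : ((E:ℝ) + 1) * t = (k:ℝ) * π - ((L:ℝ) + 1) * t := by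
      rw [ht]
      have hn1 : ((n:ℝ) + 1) ≠ 0 := by positivity
      field_simp
      linear_combination hEn
    rw [harg, Real.sin_nat_mul_pi_sub]
  have h1 := sin_prod L t
  have h2 := sin_prod E t
  rw [hsin2] at h2
  have hn1 : (0:ℝ) < (n:ℝ) + 1 := by positivity
  have hklt : (k:ℝ) < (n:ℝ) + 1 := by exact_mod_cast Nat.lt_succ_of_le hk2
  have hkpos : (0:ℝ) < (k:ℝ) := by exact_mod_cast hk1
  have htpos : 0 < t := by rw [ht]; positivity
  have htlt : t < π := by rw [ht, div_lt_iff₀ hn1]; nlinarith [pi_pos]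
  have hs : Real.sin t ≠ 0 := ne_of_gt (Real.sin_pos_of_pos_of_lt_pi htpos htlt)
  have hm1 : ((-1:ℝ)^k) ≠ 0 := pow_ne_zero _ (by norm_num)
  have hD0 : (∏ j ∈ (Finset.Icc 1 n).erase k,
      (Real.cos t - Real.cos ((j:ℝ) * π / ((n:ℝ) + 1)))) ≠ 0 := by
    intro h
    rw [h] at hd
    simp only [mul_zero, zero_mul] at hd
    have : -((-1:ℝ)^k * ((n:ℝ) + 1)) ≠ 0 := by
      simp only [neg_ne_zero]
      exact mul_ne_zero hm1 (by positivity)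
    exact this hd.symm
  have hLarg : (k:ℝ) * ((L:ℝ) + 1) * π / ((n:ℝ) + 1) = ((L:ℝ) + 1) * t := by
    rw [ht]; ring
  rw [hLarg, eq_div_iff hD0]
  have hS1 : (∏ j ∈ Finset.Icc 1 L, (Real.cos t - Real.cos ((j:ℝ) * π / ((L:ℝ) + 1))))
      = Real.sin (((L:ℝ) + 1) * t) / (2 ^ L * Real.sin t) := by
    rw [eq_div_iff (mul_ne_zero (pow_ne_zero _ two_ne_zero) hs)]
    linarith [h1]
  have hS2 : (∏ i ∈ Finset.Icc 1 E, (Real.cos t - Real.cos ((i:ℝ) * π / ((E:ℝ) + 1))))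
      = -((-1:ℝ)^k * Real.sin (((L:ℝ) + 1) * t)) / (2 ^ E * Real.sin t) := by
    rw [eq_div_iff (mul_ne_zero (pow_ne_zero _ two_ne_zero) hs)]
    linarith [h2]
  have hD : (∏ j ∈ (Finset.Icc 1 n).erase k,
      (Real.cos t - Real.cos ((j:ℝ) * π / ((n:ℝ) + 1))))
      = -((-1:ℝ)^k * ((n:ℝ) + 1)) / (2 ^ n * Real.sin t ^ 2) := by
    rw [eq_div_iff (mul_ne_zero (pow_ne_zero _ two_ne_zero) (pow_ne_zero _ hs))]
    linarith [hd]
  rw [hS1, hS2, hD]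
  have hpow : (2:ℝ) ^ n = 2 ^ L * 2 ^ E * 2 := by
    rw [← pow_add, ← pow_succ]
    congr 1
    omega
  rw [hpow]
  field_simp
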